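/- Let E be a real Hilbert space, f : ℝ → E three times continuously differentiable, t ∈ ℝ and τ > 0. Then ‖(f(t+τ) − f(t))/τ − f'(t + τ/2)‖² ≤ τ³ · ∫_t^{t+τ} ‖f'''(s)‖² ds. -/

import Mathlib

open intervalIntegral MeasureTheory

/-- Cauchy–Schwarz for interval integrals of continuous functions. -/
lemma cs_aux {a b : ℝ} (hab : a ≤ b) {g : ℝ → ℝ} (hg : Continuous g) :
    (∫ s in a..b, g s) ^ 2 ≤ (b - a) * ∫ s in a..b, (g s) ^ 2 := by
  rcases eq_or_lt_of_le hab with rfl | hab'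
  · simp
  set L : ℝ := b - a with hL
  have hL0 : 0 < L := by simp only [hL]; linarith
  set J : ℝ := ∫ s in a..b, g s with hJ
  set c : ℝ := J / L with hc
  have hint : IntervalIntegrable g volume a b := hg.intervalIntegrable a b
  have hint2 : IntervalIntegrable (fun s => (g s) ^ 2) volume a b :=
    ((hg.pow 2)).intervalIntegrable a b
  have e1 : IntervalIntegrable (fun s => 2 * c * g s) volume a b :=
    ((continuous_const.mul hg)).intervalIntegrable a b
  have e2 : IntervalIntegrable (fun s => (g s) ^ 2 - 2 * c * g s) volume a b :=
    hint2.sub e1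
  have h0 : 0 ≤ ∫ s in a..b, (g s - c) ^ 2 :=
    intervalIntegral.integral_nonneg hab (fun s _ => sq_nonneg _)
  have hexp : ∫ s in a..b, (g s - c) ^ 2
      = (∫ s in a..b, (g s) ^ 2) - 2 * c * J + c ^ 2 * L := by
    have h1 : ∀ s : ℝ, (g s - c) ^ 2 = ((g s) ^ 2 - 2 * c * g s) + c ^ 2 := by
      intro s; ring
    simp_rw [h1]
    rw [intervalIntegral.integral_add e2 intervalIntegrable_const,
      intervalIntegral.integral_sub hint2 e1,
      intervalIntegral.integral_const_mul, intervalIntegral.integral_const]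
    simp only [smul_eq_mul, ← hJ, ← hL]
    ring
  rw [hexp] at h0
  have hcJ : c * J = J ^ 2 / L := by rw [hc]; ring
  have hc2 : c ^ 2 * L = J ^ 2 / L := by rw [hc]; field_simp
  have hK : J ^ 2 / L ≤ ∫ s in a..b, (g s) ^ 2 := by nlinarith [h0, hcJ, hc2]
  have h2 := (div_le_iff₀ hL0).mp hK
  nlinarith [h2]

theorem crank_nicolson_difference_quotient_truncation_error
    {E : Type*} [NormedAddCommGroup E] [InnerProductSpace ℝ E] [CompleteSpace E]
    (f : ℝ → E) (hf : ContDiff ℝ 3 f) (t τ : ℝ) (hτ : 0 < τ) :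
    ‖τ⁻¹ • (f (t + τ) - f t) - deriv f (t + τ/2)‖^2 ≤
      τ^3 * ∫ s in t..(t + τ), ‖iteratedDeriv 3 f s‖^2 := by
  set f1 := deriv f with hf1def
  set f2 := deriv f1 with hf2def
  set f3 := deriv f2 with hf3def
  have h3 : ContDiff ℝ (2+1) f := by norm_num; exact hf
  obtain ⟨hd0, -, h2⟩ := contDiff_succ_iff_deriv.mp h3
  have h2' : ContDiff ℝ (1+1) f1 := by norm_num; exact h2
  obtain ⟨hd1, -, h1⟩ := contDiff_succ_iff_deriv.mp h2'
  have h1' : ContDiff ℝ (0+1) f2 := by norm_num; exact h1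
  obtain ⟨hd2, -, h0⟩ := contDiff_succ_iff_deriv.mp h1'
  have hc3 : Continuous f3 := h0.continuous
  have hiter : iteratedDeriv 3 f = f3 := by
    rw [show (3:ℕ) = 2+1 from rfl, iteratedDeriv_succ,
        show (2:ℕ) = 1+1 from rfl, iteratedDeriv_succ,
        show (1:ℕ) = 0+1 from rfl, iteratedDeriv_succ, iteratedDeriv_zero]
  have hD0 : ∀ s : ℝ, HasDerivAt f (f1 s) s := fun s => (hd0 s).hasDerivAt
  have hD1 : ∀ s : ℝ, HasDerivAt f1 (f2 s) s := fun s => (hd1 s).hasDerivAt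
  have hD2 : ∀ s : ℝ, HasDerivAt f2 (f3 s) s := fun s => (hd2 s).hasDerivAt
  set m := t + τ/2 with hm
  -- Taylor with integral remainder
  have key : ∀ x u v : ℝ,
      (∫ s in u..v, ((x - s)^2/2) • f3 s) =
        (f v + (x - v) • f1 v + ((x - v)^2/2) • f2 v)
        - (f u + (x - u) • f1 u + ((x - u)^2/2) • f2 u) := by
    intro x u v
    apply intervalIntegral.integral_eq_sub_of_hasDerivAt
    · intro s _
      have hx1 : HasDerivAt (fun s : ℝ => x - s) (-1) s := by
        simpa using (hasDerivAt_id s).const_sub x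
      have hx2 : HasDerivAt (fun s : ℝ => (x - s)^2/2) (-(x - s)) s := by
        have := ((hx1.fun_pow 2).div_const 2)
        refine this.congr_deriv ?_
        push_cast; ring
      have h := ((hD0 s).add (hx1.smul (hD1 s))).add (hx2.smul (hD2 s))
      convert h using 1
      · rfl
      module
    · exact (((((continuous_const.sub continuous_id).pow 2).div_const 2)).smul
        hc3).intervalIntegrable _ _
  have hA := key (t + τ) m (t + τ)
  have hB := key t m t
  have hAm : t + τ - m = τ/2 := by rw [hm]; ring
  have hBm : t - m = -(τ/2) := by rw [hm]; ring
  rw [hAm] at hA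
  rw [hBm] at hB
  have hAB : (∫ s in m..(t+τ), ((t + τ - s)^2/2) • f3 s)
      - (∫ s in m..t, ((t - s)^2/2) • f3 s) = f (t+τ) - f t - τ • f1 m := by
    rw [hA, hB]
    module
  have hDeq : τ⁻¹ • (f (t + τ) - f t) - f1 m
      = τ⁻¹ • ((∫ s in m..(t+τ), ((t + τ - s)^2/2) • f3 s)
        - (∫ s in m..t, ((t - s)^2/2) • f3 s)) := by
    rw [hAB]
    match_scalars <;> field_simp
  have hmle : m ≤ t + τ := by rw [hm]; linarith
  have htm : t ≤ m := by rw [hm]; linarith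
  have hintf3 : ∀ a b : ℝ, IntervalIntegrable (fun s => ‖f3 s‖) volume a b :=
    fun a b => hc3.norm.intervalIntegrable a b
  have hbndA : ‖∫ s in m..(t+τ), ((t + τ - s)^2/2) • f3 s‖
      ≤ ∫ s in m..(t+τ), (τ^2/8) * ‖f3 s‖ := by
    calc ‖∫ s in m..(t+τ), ((t + τ - s)^2/2) • f3 s‖
        ≤ ∫ s in m..(t+τ), ‖((t + τ - s)^2/2) • f3 s‖ :=
          intervalIntegral.norm_integral_le_integral_norm hmle
      _ ≤ ∫ s in m..(t+τ), (τ^2/8) * ‖f3 s‖ := by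
          apply intervalIntegral.integral_mono_on hmle
          · exact ((((((continuous_const.sub continuous_id).pow 2).div_const 2)).smul
              hc3).norm).intervalIntegrable _ _
          · exact (hintf3 _ _).const_mul _
          · intro s hs
            rw [norm_smul, Real.norm_eq_abs]
            have h1 : 0 ≤ t + τ - s := by have := hs.2; linarith
            have h2 : t + τ - s ≤ τ/2 := by
              have := hs.1; rw [hm] at this; linarith
            have hw : |(t + τ - s)^2/2| ≤ τ^2/8 := by
              rw [abs_of_nonneg (by positivity)]
              nlinarith
            exact mul_le_mul_of_nonneg_right hw (norm_nonneg _)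
  have hbndB : ‖∫ s in m..t, ((t - s)^2/2) • f3 s‖
      ≤ ∫ s in t..m, (τ^2/8) * ‖f3 s‖ := by
    rw [intervalIntegral.integral_symm, norm_neg]
    calc ‖∫ s in t..m, ((t - s)^2/2) • f3 s‖
        ≤ ∫ s in t..m, ‖((t - s)^2/2) • f3 s‖ :=
          intervalIntegral.norm_integral_le_integral_norm htm
      _ ≤ ∫ s in t..m, (τ^2/8) * ‖f3 s‖ := by
          apply intervalIntegral.integral_mono_on htm
          · exact ((((((continuous_const.sub continuous_id).pow 2).div_const 2)).smul
              hc3).norm).intervalIntegrable _ _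
          · exact (hintf3 _ _).const_mul _
          · intro s hs
            rw [norm_smul, Real.norm_eq_abs]
            have h1 : t ≤ s := hs.1
            have h2 : s ≤ m := hs.2
            have hw : |(t - s)^2/2| ≤ τ^2/8 := by
              rw [abs_of_nonneg (by positivity)]
              rw [hm] at h2
              nlinarith
            exact mul_le_mul_of_nonneg_right hw (norm_nonneg _)
  set J := ∫ s in t..(t+τ), ‖f3 s‖ with hJdef
  clear_value J
  have hglue : (∫ s in t..m, (τ^2/8) * ‖f3 s‖) + (∫ s in m..(t+τ), (τ^2/8) * ‖f3 s‖)
      = (τ^2/8) * J := by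
    rw [hJdef, intervalIntegral.integral_add_adjacent_intervals
      ((hintf3 _ _).const_mul _) ((hintf3 _ _).const_mul _),
      intervalIntegral.integral_const_mul]
  have hJ0 : 0 ≤ J := by
    rw [hJdef]
    exact intervalIntegral.integral_nonneg (by linarith) (fun s _ => norm_nonneg _)
  have hDnorm : ‖τ⁻¹ • (f (t + τ) - f t) - f1 m‖ ≤ τ⁻¹ * ((τ^2/8) * J) := by
    rw [hDeq, norm_smul, Real.norm_eq_abs, abs_of_pos (by positivity)]
    have hABn : ‖(∫ s in m..(t+τ), ((t + τ - s)^2/2) • f3 s)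
        - (∫ s in m..t, ((t - s)^2/2) • f3 s)‖ ≤ (τ^2/8) * J := by
      calc ‖(∫ s in m..(t+τ), ((t + τ - s)^2/2) • f3 s)
          - (∫ s in m..t, ((t - s)^2/2) • f3 s)‖
          ≤ ‖∫ s in m..(t+τ), ((t + τ - s)^2/2) • f3 s‖
            + ‖∫ s in m..t, ((t - s)^2/2) • f3 s‖ := norm_sub_le _ _
        _ ≤ (∫ s in m..(t+τ), (τ^2/8) * ‖f3 s‖) + (∫ s in t..m, (τ^2/8) * ‖f3 s‖) := by
            linarith
        _ = (τ^2/8) * J := by rw [← hglue]; ring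
    exact mul_le_mul_of_nonneg_left hABn (by positivity)
  set K := ∫ s in t..(t+τ), ‖f3 s‖^2 with hKdef
  clear_value K
  have hCS : J ^ 2 ≤ τ * K := by
    have := cs_aux (by linarith : t ≤ t + τ) hc3.norm
    simpa [hJdef, hKdef] using this
  have hK0 : 0 ≤ K := by
    rw [hKdef]
    exact intervalIntegral.integral_nonneg (by linarith) (fun s _ => sq_nonneg _)
  have hfinal : ‖τ⁻¹ • (f (t + τ) - f t) - f1 m‖^2 ≤ τ^3 * K := by
    have hb : (τ⁻¹ * ((τ^2/8) * J))^2 = τ^2/64 * J^2 := by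
      field_simp; ring
    calc ‖τ⁻¹ • (f (t + τ) - f t) - f1 m‖^2
        ≤ (τ⁻¹ * ((τ^2/8) * J))^2 := by
          exact pow_le_pow_left₀ (norm_nonneg _) hDnorm 2
      _ = τ^2/64 * J^2 := hb
      _ ≤ τ^2/64 * (τ * K) := mul_le_mul_of_nonneg_left hCS (by positivity)
      _ = τ^3/64 * K := by ring
      _ ≤ τ^3 * K := by
          refine mul_le_mul_of_nonneg_right ?_ hK0
          have := pow_pos hτ 3
          linarith
  calc ‖τ⁻¹ • (f (t + τ) - f t) - f1 m‖^2 ≤ τ^3 * K := hfinal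
    _ = τ^3 * ∫ s in t..(t + τ), ‖iteratedDeriv 3 f s‖^2 := by rw [hiter, hKdef]
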